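/- For natural numbers n and k with n ≥ 2k - 1 and k ≥ 1, the Kneser graph KG_{n,k} admits a proper coloring with n - 2k + 2 colors; equivalently, its chromatic number satisfies χ(KG_{n,k}) ≤ n - 2k + 2. -/

import Mathlib

def kneserGraph (n k : ℕ) : SimpleGraph {s : Finset (Fin n) // s.card = k} :=
  SimpleGraph.fromRel (fun A B => Disjoint A.1 B.1)

theorem kneser_chromaticNumber_le (n k : ℕ) (hk : 1 ≤ k) (hn : 2 * k - 1 ≤ n) :
    (kneserGraph n k).chromaticNumber ≤ (n - 2 * k + 2 : ℕ) := by
  set t := n - 2 * k + 1 with ht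
  have hpos : ∀ (S : {s : Finset (Fin n) // s.card = k}), S.1.Nonempty := by
    intro S
    rw [← Finset.card_pos, S.2]; omega
  have hcol : (kneserGraph n k).Colorable (n - 2 * k + 2) := by
    refine ⟨SimpleGraph.Coloring.mk
      (fun S => ⟨min ((S.1.min' (hpos S)).val) t, by omega⟩) ?_⟩
    intro A B hadj hfeq
    obtain ⟨hne, hd⟩ := hadj
    have hd : Disjoint A.1 B.1 := by
      rcases hd with h | h
      · exact h
      · exact h.symm
    have heq : min ((A.1.min' (hpos A)).val) t = min ((B.1.min' (hpos B)).val) t :=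
      congrArg Fin.val hfeq
    set a := A.1.min' (hpos A) with ha
    set b := B.1.min' (hpos B) with hb
    have haA : a ∈ A.1 := Finset.min'_mem _ _
    have hbB : b ∈ B.1 := Finset.min'_mem _ _
    by_cases hA : a.val < t
    · have hab : a = b := by
        apply Fin.ext; omega
      exact Finset.disjoint_left.mp hd haA (hab ▸ hbB)
    · by_cases hB : b.val < t
      · have hab : a = b := by apply Fin.ext; omega
        exact Finset.disjoint_left.mp hd haA (hab ▸ hbB)
      · -- both minima ≥ t : A ∪ B ⊆ {x | t ≤ x}, size n - t < 2k
        push_neg at hA hB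
        have hmem : ∀ x ∈ A.1 ∪ B.1, t ≤ x.val := by
          intro x hx
          rcases Finset.mem_union.mp hx with h | h
          · exact le_trans hA (Finset.min'_le _ _ h)
          · exact le_trans hB (Finset.min'_le _ _ h)
        have hcard : (A.1 ∪ B.1).card = 2 * k := by
          rw [Finset.card_union_of_disjoint hd, A.2, B.2]; ring
        have hle : (A.1 ∪ B.1).card ≤ (Finset.range (n - t)).card := by
          apply Finset.card_le_card_of_injOn (fun x => x.val - t)
          · intro x hx
            have := hmem x hx
            have := x.isLt
            simp only [Finset.mem_coe, Finset.coe_range, Set.mem_Iio, Finset.mem_range]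
            omega
          · intro x hx y hy hxy
            have := hmem x hx
            have := hmem y hy
            apply Fin.ext
            simp only at hxy
            omega
        rw [hcard, Finset.card_range] at hle
        omega
  calc (kneserGraph n k).chromaticNumber ≤ (n - 2 * k + 2 : ℕ) := hcol.chromaticNumber_le
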